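/- Fix λ ∈ [0,1] and a sequence of nonnegative reals ρ_1, ρ_2, …. The RBIS recursion β_0 := 1, β_t := min(λ^t, β_{t−1} ρ_t), unrolls to the closed form β_t = min over j ∈ {0, 1, …, t} of λ^{t−j} ∏_{k=t−j+1}^{t} ρ_k (where the j = 0 term is λ^t and the j = t term is ∏_{k=1}^{t} ρ_k); i.e., the RBIS trace is the minimum of all past discounted n-step importance-sampling estimates. -/

import Mathlib

open scoped BigOperators

lemma inf'_mul_const {s : Finset ℕ} (h : s.Nonempty) (f : ℕ → ℝ) {c : ℝ} (hc : 0 ≤ c) :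
    s.inf' h f * c = s.inf' h (fun x => f x * c) := by
  obtain ⟨i, hi, hfi⟩ := s.exists_mem_eq_inf' h f
  rw [hfi]
  apply le_antisymm
  · exact Finset.le_inf' _ _ fun x hx =>
      mul_le_mul_of_nonneg_right (hfi ▸ Finset.inf'_le f hx) hc
  · exact Finset.inf'_le _ hi

/-- the RBIS recursion `β_0 = 1`, `β_t = min(λ^t, β_{t−1} ρ_t)` unrolls to
`β_t = min_{0 ≤ j ≤ t} λ^{t−j} ∏_{k=t−j+1}^{t} ρ_k`. -/
theorem stmt13 (lam : ℝ) (hlam : lam ∈ Set.Icc (0 : ℝ) 1)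
    (ρ : ℕ → ℝ) (hρ : ∀ k, 0 ≤ ρ k)
    (β : ℕ → ℝ) (hβ0 : β 0 = 1)
    (hβ : ∀ t : ℕ, β (t + 1) = min (lam ^ (t + 1)) (β t * ρ (t + 1))) :
    ∀ t : ℕ,
      β t = (Finset.range (t + 1)).inf' Finset.nonempty_range_add_one
        (fun j => lam ^ (t - j) * ∏ k ∈ Finset.Icc (t - j + 1) t, ρ k) := by
  intro t
  induction t with
  | zero => simp [hβ0]
  | succ t ih =>
    rw [hβ t, ih, inf'_mul_const _ _ (hρ (t + 1))]
    set f : ℕ → ℝ := fun j => lam ^ (t + 1 - j) * ∏ k ∈ Finset.Icc (t + 1 - j + 1) (t + 1), ρ k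
      with hf
    set g : ℕ → ℝ := fun x => (lam ^ (t - x) * ∏ k ∈ Finset.Icc (t - x + 1) t, ρ k) * ρ (t + 1)
      with hg
    have h0 : f 0 = lam ^ (t + 1) := by
      simp [hf, Finset.Icc_eq_empty_of_lt]
    have hterm : ∀ j, j < t + 1 → f (j + 1) = g j := by
      intro j hj
      have h1 : t + 1 - (j + 1) = t - j := by omega
      have h2 : t - j + 1 ≤ t + 1 := by omega
      simp only [hf, hg, h1, Finset.prod_Icc_succ_top h2]; ring
    apply le_antisymm
    · apply Finset.le_inf'
      intro j hj
      rw [Finset.mem_range] at hj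
      match j, hj with
      | 0, _ => rw [h0]; exact min_le_left _ _
      | (i + 1), hj =>
        rw [hterm i (by omega)]
        exact le_trans (min_le_right _ _)
          (Finset.inf'_le _ (Finset.mem_range.mpr (by omega)))
    · apply le_min
      · exact h0 ▸ Finset.inf'_le _ (Finset.mem_range.mpr (by omega))
      · apply Finset.le_inf'
        intro j hj
        rw [Finset.mem_range] at hj
        exact (hterm j hj) ▸ Finset.inf'_le _ (Finset.mem_range.mpr (by omega))
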